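/- Let P be a set of finite words over ℕ, let v be a (finite or infinite) word over ℕ that is irreducible with respect to P, and let w be a (finite or infinite) word over ℕ that is P-free. Then either w is a prefix of v, or v ≤ w in lexicographic order. Consequently, an infinite word that is both P-free and irreducible with respect to P is the lexicographically least infinite P-free word over ℕ. -/

import Mathlib

/-- A (finite or infinite) word over ℕ: either a finite list, or an infinite
sequence of letters (a function from positions to ℕ). -/
def Word : Type := List ℕ ⊕ (ℕ → ℕ)

/-- The letter of a word at (0-indexed) position `n`, if any. -/
def wget : Word → ℕ → Option ℕ
  | .inl l, n => l[n]?
  | .inr f, n => some (f n)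

/-- The word obtained by replacing the letter at position `n` by `c`. -/
def wset : Word → ℕ → ℕ → Word
  | .inl l, n, c => .inl (l.set n c)
  | .inr f, n, c => .inr (Function.update f n c)

/-- The finite word `x` occurs in `v` as a factor ending at (0-indexed) position `n`. -/
def FactorEndAt (x : List ℕ) (v : Word) (n : ℕ) : Prop :=
  x.length ≤ n + 1 ∧ ∀ j < x.length, x[j]? = wget v (n + 1 - x.length + j)

/-- `v` avoids the pattern `P` (is `P`-free): no factor of `v` belongs to `P`. -/
def PFreeW (P : Set (List ℕ)) (v : Word) : Prop :=
  ∀ x ∈ P, ∀ n, ¬ FactorEndAt x v n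

/-- `v` is irreducible at position `n` with respect to `P`: replacing the letter at
position `n` by any strictly smaller letter yields a word with a factor in `P`
ending at position `n`. -/
def IrredAt (P : Set (List ℕ)) (v : Word) (n : ℕ) : Prop :=
  ∀ d, wget v n = some d → ∀ c < d, ∃ x ∈ P, FactorEndAt x (wset v n c) n

/-- `v` is irreducible with respect to `P` if it is irreducible at every position. -/
def Irred (P : Set (List ℕ)) (v : Word) : Prop := ∀ n, IrredAt P v n

/-- `w` is a prefix of `v`. -/
def IsPrefixW (w v : Word) : Prop := ∀ n c, wget w n = some c → wget v n = some c

/-- Lexicographic order: `v ≤ w` iff `v` is a prefix of `w`, or `v` and `w` share a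
common prefix immediately after which `v` has a strictly smaller letter than `w`. -/
def LexLeW (v w : Word) : Prop :=
  IsPrefixW v w ∨ ∃ n c d, c < d ∧ wget v n = some c ∧ wget w n = some d ∧
    ∀ m < n, wget v m = wget w m

/-- If `v` is irreducible with respect to `P` and `w` is `P`-free, then either `w` is a
prefix of `v`, or `v ≤ w` lexicographically. Consequently, an infinite word that is both
`P`-free and irreducible is the lexicographically least infinite `P`-free word over ℕ. -/
lemma wget_none_mono {v : Word} {n m : ℕ} (h : wget v n = none) (hm : n ≤ m) :
    wget v m = none := by
  cases v with
  | inl l =>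
    simp only [wget, List.getElem?_eq_none_iff] at h ⊢
    omega
  | inr f => simp [wget] at h

lemma wget_wset_self {v : Word} {n : ℕ} {d : ℕ} (h : wget v n = some d) (c : ℕ) :
    wget (wset v n c) n = some c := by
  cases v with
  | inl l =>
    simp only [wget, wset] at h ⊢
    have hn : n < l.length := by
      by_contra hc
      rw [List.getElem?_eq_none (by omega)] at h
      exact nomatch h
    simp [List.getElem?_set, hn]
  | inr f => simp [wget, wset]

lemma wget_wset_ne {v : Word} {n m c : ℕ} (h : m ≠ n) :
    wget (wset v n c) m = wget v m := by
  cases v with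
  | inl l => simp [wget, wset, List.getElem?_set, Ne.symm h]
  | inr f => simp [wget, wset, Function.update_of_ne h]

lemma factor_transfer {x : List ℕ} {u w : Word} {n : ℕ}
    (h : FactorEndAt x u n) (hag : ∀ m ≤ n, wget u m = wget w m) :
    FactorEndAt x w n := by
  obtain ⟨hlen, hx⟩ := h
  refine ⟨hlen, fun j hj => ?_⟩
  rw [hx j hj, hag _ (by omega)]

theorem irreducible_lex_least :
    (∀ (P : Set (List ℕ)) (v w : Word), Irred P v → PFreeW P w →
      IsPrefixW w v ∨ LexLeW v w) ∧
    (∀ (P : Set (List ℕ)) (f : ℕ → ℕ), PFreeW P (.inr f) → Irred P (.inr f) →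
      ∀ g : ℕ → ℕ, PFreeW P (.inr g) → LexLeW (.inr f) (.inr g)) := by
  have main : ∀ (P : Set (List ℕ)) (v w : Word), Irred P v → PFreeW P w →
      IsPrefixW w v ∨ LexLeW v w := by
    intro P v w hv hw
    by_cases hS : ∀ n, wget v n = wget w n
    · left
      intro n c hc
      rw [hS n]; exact hc
    · push_neg at hS
      have hex : ∃ n, wget v n ≠ wget w n := hS
      classical
      set n := Nat.find hex with hn
      have hne : wget v n ≠ wget w n := Nat.find_spec hex
      have hmin : ∀ m < n, wget v m = wget w m := by
        intro m hm
        by_contra hc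
        exact absurd hm (not_lt.2 (Nat.find_le hc))
      rcases hvn : wget v n with _ | d
      · rcases hwn : wget w n with _ | c
        · exact absurd (hvn.trans hwn.symm) hne
        · -- v ends before n, so v is a prefix of w
          right; left
          intro m c' hm
          rcases lt_or_ge m n with h | h
          · rw [← hmin m h]; exact hm
          · rw [wget_none_mono hvn h] at hm; exact nomatch hm
      · rcases hwn : wget w n with _ | c
        · -- w ends before n, so w is a prefix of v
          left
          intro m c' hm
          rcases lt_or_ge m n with h | h
          · rw [hmin m h]; exact hm
          · rw [wget_none_mono hwn h] at hm; exact nomatch hm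
        · rcases lt_trichotomy d c with h | h | h
          · right; right
            exact ⟨n, d, c, h, hvn, hwn, hmin⟩
          · exact absurd (by rw [hvn, hwn, h]) hne
          · -- c < d : use irreducibility, contradiction with P-freeness of w
            exfalso
            obtain ⟨x, hxP, hfac⟩ := hv n d hvn c h
            refine hw x hxP n (factor_transfer hfac ?_)
            intro m hm
            rcases eq_or_ne m n with rfl | hmn
            · rw [wget_wset_self hvn c, hwn]
            · rw [wget_wset_ne hmn, hmin m (by omega)]
  refine ⟨main, fun P f hf hif g hg => ?_⟩
  rcases main P (.inr f) (.inr g) hif hg with h | h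
  · left
    intro m c hm
    have := h m (g m) (by simp [wget])
    simp only [wget] at this hm ⊢
    rw [← (Option.some.inj this), hm]
  · exact h
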